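/- Let H be a reproducing kernel Hilbert space on a set X with kernel K normalized at a point z₀ (i.e., K(z, z₀) = 1 for all z ∈ X). Let z₁, …, z_n ∈ X be distinct, let L = [K(z_i, z_j)] be the Gram matrix, and let 𝟙 be the all-ones vector. Set γ = sup{|f(z₀)| : f ∈ H, f(z_k) = 0 for 1 ≤ k ≤ n, ‖f‖ ≤ 1}. If M is any n×n matrix with LML = L, then γ² = 1 - ⟨M𝟙, 𝟙⟩. -/

import Mathlib

open scoped InnerProductSpace

/-- Gramian formula for the extremal value of the problem of vanishing at n points in
an RKHS with kernel normalized at z₀: if LML = L then γ² = 1 - ⟨M𝟙, 𝟙⟩. -/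
theorem stmt3 {X : Type*} {H : Type*} [NormedAddCommGroup H] [InnerProductSpace ℂ H]
    [CompleteSpace H]
    (ev : H →ₗ[ℂ] (X → ℂ)) (k : X → H)
    (hrep : ∀ (f : H) (z : X), ev f z = ⟪k z, f⟫_ℂ)
    (K : X → X → ℂ) (hK : ∀ z w, K z w = ev (k w) z)
    (z0 : X) (hnorm : ∀ z, K z z0 = 1)
    {n : ℕ} (zs : Fin n → X) (hinj : Function.Injective zs)
    (L M : Matrix (Fin n) (Fin n) ℂ) (hL : ∀ i j, L i j = K (zs i) (zs j))
    (hM : L * M * L = L)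
    (γ : ℝ)
    (hγ : γ = sSup {x : ℝ | ∃ f : H, (∀ i, ev f (zs i) = 0) ∧ ‖f‖ ≤ 1 ∧
      x = ‖ev f z0‖}) :
    ((γ : ℂ)) ^ 2 = 1 - ∑ i, ∑ j, M i j := by
  have hKin : ∀ z w, K z w = ⟪k z, k w⟫_ℂ := fun z w => by rw [hK, hrep]
  set V : Submodule ℂ H := Submodule.span ℂ (Set.range fun i => k (zs i)) with hV
  haveI : FiniteDimensional ℂ V := FiniteDimensional.span_of_finite ℂ (Set.finite_range _)
  set p : H := (V.orthogonalProjection (k z0) : H) with hp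
  set d : H := k z0 - p with hd
  have hdV : d ∈ Vᗮ := Submodule.sub_starProjection_mem_orthogonal (K := V) (k z0)
  have hdk : ∀ i, ⟪k (zs i), d⟫_ℂ = 0 := fun i =>
    hdV _ (Submodule.subset_span ⟨i, rfl⟩)
  obtain ⟨c, hc⟩ := (Submodule.mem_span_range_iff_exists_fun ℂ).mp
    (V.orthogonalProjection (k z0)).2
  -- hc : ∑ i, c i • k (zs i) = p
  rw [← hp] at hc
  have hpd : ⟪p, d⟫_ℂ = 0 := by
    rw [← hc, sum_inner]
    simp [inner_smul_left, hdk]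
  have hdp : ⟪d, p⟫_ℂ = 0 := by rw [← inner_conj_symm, hpd, map_zero]
  have hkk1 : ⟪k z0, k z0⟫_ℂ = 1 := by rw [← hKin, hnorm]
  have hker : ∀ (f : H), (∀ i, ev f (zs i) = 0) → ev f z0 = ⟪d, f⟫_ℂ := by
    intro f hf
    have hpf : ⟪p, f⟫_ℂ = 0 := by
      rw [← hc, sum_inner]
      apply Finset.sum_eq_zero
      intro i _
      rw [inner_smul_left]
      have : ⟪k (zs i), f⟫_ℂ = 0 := by rw [← hrep]; exact hf i
      rw [this, mul_zero]
    rw [hrep]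
    have : k z0 = d + p := by rw [hd]; abel
    rw [this, inner_add_left, hpf, add_zero]
  have hγd : γ = ‖d‖ := by
    rw [hγ]
    apply IsGreatest.csSup_eq
    constructor
    · by_cases hd0 : d = 0
      · exact ⟨0, fun i => by simp, by simp, by simp [hd0, map_zero]⟩
      · refine ⟨(‖d‖ : ℂ)⁻¹ • d, fun i => ?_, ?_, ?_⟩
        · rw [hrep, inner_smul_right, hdk, mul_zero]
        · rw [norm_smul]
          simp [norm_inv, Complex.norm_real]
          rw [inv_mul_cancel₀ (norm_ne_zero_iff.mpr hd0)]
        · rw [hker _ (fun i => by rw [hrep, inner_smul_right, hdk, mul_zero])]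
          rw [inner_smul_right, inner_self_eq_norm_sq_to_K]
          rw [norm_mul, norm_inv]
          simp [Complex.norm_real, abs_of_nonneg (norm_nonneg d)]
          rw [pow_two, ← mul_assoc, inv_mul_cancel₀ (norm_ne_zero_iff.mpr hd0), one_mul]
    · rintro x ⟨f, hf0, hf1, rfl⟩
      rw [hker f hf0]
      calc ‖⟪d, f⟫_ℂ‖ ≤ ‖d‖ * ‖f‖ := norm_inner_le_norm (𝕜 := ℂ) d f
        _ ≤ ‖d‖ * 1 := by
            exact mul_le_mul_of_nonneg_left hf1 (norm_nonneg d)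
        _ = ‖d‖ := mul_one _
  -- L applied to c gives the all-ones vector
  have hLc : ∀ j, ∑ i, L j i * c i = 1 := by
    intro j
    have h1 : ∑ i, L j i * c i = ⟪k (zs j), p⟫_ℂ := by
      rw [← hc, inner_sum]
      refine Finset.sum_congr rfl fun i _ => ?_
      rw [inner_smul_right, hL, hKin, mul_comm]
    have h2 : ⟪k (zs j), p⟫_ℂ = 1 := by
      have h3 := hdk j
      rw [hd, inner_sub_right, sub_eq_zero] at h3
      rw [← h3, ← hKin, hnorm]
    rw [h1, h2]
  have hLherm : ∀ i j, (starRingEnd ℂ) (L i j) = L j i := fun i j => by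
    rw [hL, hL, hKin, hKin, inner_conj_symm]
  have h1 : ∀ i, ∑ a, (starRingEnd ℂ) (c a) * L a i = 1 := by
    intro i
    have h2 := congrArg (starRingEnd ℂ) (hLc i)
    rw [map_sum, map_one] at h2
    rw [← h2]
    refine Finset.sum_congr rfl fun a _ => ?_
    rw [map_mul, hLherm]; ring
  have hpp : ⟪p, p⟫_ℂ = ∑ a, ∑ b, (starRingEnd ℂ) (c a) * L a b * c b := by
    rw [← hc, sum_inner]
    refine Finset.sum_congr rfl fun a _ => ?_
    rw [inner_smul_left, inner_sum, Finset.mul_sum]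
    refine Finset.sum_congr rfl fun b _ => ?_
    rw [inner_smul_right, show ⟪k (zs a), k (zs b)⟫_ℂ = L a b from by rw [hL, hKin]]
    ring
  have hLML : ∀ a b, ∑ i, ∑ j, L a i * M i j * L j b = L a b := by
    intro a b
    have h2 := congrArg (fun A => A a b) hM
    simp only [Matrix.mul_apply] at h2
    rw [← h2]
    rw [Finset.sum_comm]
    refine Finset.sum_congr rfl fun j _ => ?_
    rw [Finset.sum_mul]
  have sc : ∀ (F : Fin n → Fin n → Fin n → Fin n → ℂ),
      ∑ i, ∑ j, ∑ a, ∑ b, F i j a b = ∑ a, ∑ b, ∑ i, ∑ j, F i j a b := by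
    intro F
    rw [show (∑ i, ∑ j, ∑ a, ∑ b, F i j a b) = ∑ i, ∑ a, ∑ j, ∑ b, F i j a b from
      Finset.sum_congr rfl fun i _ => Finset.sum_comm]
    rw [Finset.sum_comm]
    refine Finset.sum_congr rfl fun a _ => ?_
    rw [show (∑ i, ∑ j, ∑ b, F i j a b) = ∑ i, ∑ b, ∑ j, F i j a b from
      Finset.sum_congr rfl fun i _ => Finset.sum_comm]
    exact Finset.sum_comm
  have key : ∑ i, ∑ j, M i j = ∑ a, ∑ b, (starRingEnd ℂ) (c a) * L a b * c b := by
    calc ∑ i, ∑ j, M i j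
        = ∑ i, ∑ j, ∑ a, ∑ b, (starRingEnd ℂ) (c a) * (L a i * M i j * L j b) * c b := by
          refine Finset.sum_congr rfl fun i _ => Finset.sum_congr rfl fun j _ => ?_
          calc M i j = (∑ a, (starRingEnd ℂ) (c a) * L a i) * M i j * (∑ b, L j b * c b) := by
                rw [h1 i, hLc j, one_mul, mul_one]
            _ = _ := by
                simp only [Finset.sum_mul, Finset.mul_sum]
                rw [Finset.sum_comm]
                refine Finset.sum_congr rfl fun a _ => Finset.sum_congr rfl fun b _ => ?_
                ring
      _ = ∑ a, ∑ b, ∑ i, ∑ j, (starRingEnd ℂ) (c a) * (L a i * M i j * L j b) * c b := sc _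
      _ = ∑ a, ∑ b, (starRingEnd ℂ) (c a) * L a b * c b := by
          refine Finset.sum_congr rfl fun a _ => Finset.sum_congr rfl fun b _ => ?_
          rw [← hLML a b]
          simp only [Finset.mul_sum, Finset.sum_mul]
  have hdd : ⟪d, d⟫_ℂ = 1 - ∑ i, ∑ j, M i j := by
    have hkz0 : k z0 = d + p := by rw [hd]; abel
    have expand : ⟪k z0, k z0⟫_ℂ = ⟪d, d⟫_ℂ + ⟪p, p⟫_ℂ := by
      conv_lhs => rw [hkz0]
      rw [inner_add_left, inner_add_right, inner_add_right, hpd, hdp]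
      ring
    have : ⟪d, d⟫_ℂ = 1 - ⟪p, p⟫_ℂ := by rw [← hkk1, expand]; ring
    rw [this, hpp, ← key]
  rw [hγd, show ((‖d‖ : ℂ)) ^ 2 = ⟪d, d⟫_ℂ from (inner_self_eq_norm_sq_to_K d).symm, hdd]
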